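/- Consider an interchange of order n (lanes L₁,...,Lₙ in order, with a ramp r(i,j) for each pair i<j adjacent to Lᵢ and Lⱼ, possibly adjacent to lanes strictly between them, and non-adjacent to all other lanes). Let F be a collection of flips, and let a,b,c and d,e,f be two disjoint triples of lanes such that a,b,c are pairwise equivalent under F and d,e,f are pairwise equivalent under F (equivalent meaning contained in exactly the same flips). Then after performing all flips in F, the flipped graph contains a two-edge path lane–ramp–lane connecting some lane in {a,b,c} to some lane in {d,e,f}. -/

import Mathlib

/-- An interchange of order `n` in a graph `G`: a linear sequence of `n` lanes, and a
ramp for each pair of lanes; each ramp is adjacent to its two lanes and non-adjacent to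
every lane outside the interval between its two lanes (lane–lane and ramp–ramp edges,
and edges from a ramp to lanes strictly between its two lanes, are unconstrained). -/
structure Interchange {V : Type*} (G : SimpleGraph V) (n : ℕ) where
  lane : Fin n → V
  ramp : ∀ i j : Fin n, i < j → V
  lane_inj : Function.Injective lane
  ramp_ne_lane : ∀ i j (h : i < j) (k : Fin n), ramp i j h ≠ lane k
  ramp_inj : ∀ i j (h : i < j) i' j' (h' : i' < j'),
    ramp i j h = ramp i' j' h' → i = i' ∧ j = j'
  adj_left : ∀ i j (h : i < j), G.Adj (ramp i j h) (lane i)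
  adj_right : ∀ i j (h : i < j), G.Adj (ramp i j h) (lane j)
  not_adj : ∀ i j (h : i < j) (k : Fin n), k < i ∨ j < k → ¬ G.Adj (ramp i j h) (lane k)

/-- The graph obtained from `G` by performing a collection `F` of flips: the adjacency
of a pair of distinct vertices is toggled once for each flip containing both. -/
def multiFlip {V : Type*} (G : SimpleGraph V) (F : Finset (Set V)) : SimpleGraph V where
  Adj u v := u ≠ v ∧ Xor' (G.Adj u v) (Odd {A : Set V | A ∈ F ∧ u ∈ A ∧ v ∈ A}.ncard)
  symm := ⟨by
    intro u v h
    refine ⟨h.1.symm, ?_⟩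
    have hset : {A : Set V | A ∈ F ∧ v ∈ A ∧ u ∈ A} = {A : Set V | A ∈ F ∧ u ∈ A ∧ v ∈ A} := by
      ext A; simp only [Set.mem_setOf_eq]; tauto
    rw [G.adj_comm v u, hset]
    exact h.2⟩
  loopless := ⟨fun v h => h.1 rfl⟩

/-- Two vertices are equivalent under a collection `F` of flips if each flip in `F`
contains both or neither of them. -/
def EqvUnder {V : Type*} (F : Finset (Set V)) (u v : V) : Prop :=
  ∀ A ∈ F, (u ∈ A ↔ v ∈ A)

lemma exists_ne_of_card3 {α : Type*} [DecidableEq α] (s : Finset α) (hs : s.card = 3) (p : α) :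
    ∃ y ∈ s, y ≠ p := by
  by_contra h
  push_neg at h
  have hsub : s ⊆ {p} := fun z hz => Finset.mem_singleton.mpr (h z hz)
  have := Finset.card_le_card hsub
  simp [hs] at this

lemma flip_side {V : Type*} (G : SimpleGraph V) {n : ℕ} (I : Interchange G n)
    (F : Finset (Set V)) (p q : Fin n) (hpq : p < q) (x y : Fin n)
    (hx : x = p ∨ x = q)
    (hxy : EqvUnder F (I.lane x) (I.lane y))
    (hy : y < p ∨ q < y) :
    (multiFlip G F).Adj (I.ramp p q hpq) (I.lane x) ∨
      (multiFlip G F).Adj (I.ramp p q hpq) (I.lane y) := by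
  set r := I.ramp p q hpq with hr
  have hGx : G.Adj r (I.lane x) := by
    rcases hx with h | h
    · rw [h]; exact I.adj_left p q hpq
    · rw [h]; exact I.adj_right p q hpq
  have hGy : ¬ G.Adj r (I.lane y) := I.not_adj p q hpq y hy
  have hne_x : r ≠ I.lane x := I.ramp_ne_lane p q hpq x
  have hne_y : r ≠ I.lane y := I.ramp_ne_lane p q hpq y
  have hset : {A : Set V | A ∈ F ∧ r ∈ A ∧ I.lane x ∈ A}
      = {A : Set V | A ∈ F ∧ r ∈ A ∧ I.lane y ∈ A} := by
    ext A
    simp only [Set.mem_setOf_eq]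
    constructor
    · rintro ⟨h1, h2, h3⟩; exact ⟨h1, h2, (hxy A h1).1 h3⟩
    · rintro ⟨h1, h2, h3⟩; exact ⟨h1, h2, (hxy A h1).2 h3⟩
  by_cases hP : Odd {A : Set V | A ∈ F ∧ r ∈ A ∧ I.lane y ∈ A}.ncard
  · right
    exact ⟨hne_y, Or.inr ⟨hP, hGy⟩⟩
  · left
    refine ⟨hne_x, Or.inl ⟨hGx, ?_⟩⟩
    rw [hset]
    exact hP

lemma triple_aux {V : Type*} (G : SimpleGraph V) {n : ℕ} (I : Interchange G n)
    (F : Finset (Set V)) (a b c d e f : Fin n)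
    (hcard1 : ({a, b, c} : Finset (Fin n)).card = 3)
    (hcard2 : ({d, e, f} : Finset (Fin n)).card = 3)
    (hdisj : Disjoint ({a, b, c} : Finset (Fin n)) ({d, e, f} : Finset (Fin n)))
    (hab : EqvUnder F (I.lane a) (I.lane b)) (hac : EqvUnder F (I.lane a) (I.lane c))
    (hde : EqvUnder F (I.lane d) (I.lane e)) (hdf : EqvUnder F (I.lane d) (I.lane f))
    (hlt : ∃ z ∈ ({a, b, c} : Finset (Fin n)),
      ∀ w ∈ ({d, e, f} : Finset (Fin n)), z < w) :
    ∃ x ∈ ({a, b, c} : Finset (Fin n)), ∃ y ∈ ({d, e, f} : Finset (Fin n)),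
      ∃ (p q : Fin n) (hpq : p < q),
        (multiFlip G F).Adj (I.lane x) (I.ramp p q hpq) ∧
        (multiFlip G F).Adj (I.ramp p q hpq) (I.lane y) := by
  classical
  have heqv1 : ∀ x ∈ ({a, b, c} : Finset (Fin n)), ∀ y ∈ ({a, b, c} : Finset (Fin n)),
      EqvUnder F (I.lane x) (I.lane y) := by
    intro x hx y hy
    simp only [Finset.mem_insert, Finset.mem_singleton] at hx hy
    intro A hA
    have h1 := hab A hA
    have h2 := hac A hA
    rcases hx with rfl | rfl | rfl <;> rcases hy with rfl | rfl | rfl <;> tauto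
  have heqv2 : ∀ x ∈ ({d, e, f} : Finset (Fin n)), ∀ y ∈ ({d, e, f} : Finset (Fin n)),
      EqvUnder F (I.lane x) (I.lane y) := by
    intro x hx y hy
    simp only [Finset.mem_insert, Finset.mem_singleton] at hx hy
    intro A hA
    have h1 := hde A hA
    have h2 := hdf A hA
    rcases hx with rfl | rfl | rfl <;> rcases hy with rfl | rfl | rfl <;> tauto
  have hT2ne : ({d, e, f} : Finset (Fin n)).Nonempty := ⟨d, by simp⟩
  set q := ({d, e, f} : Finset (Fin n)).min' hT2ne with hqdef
  have hqT2 : q ∈ ({d, e, f} : Finset (Fin n)) := Finset.min'_mem _ _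
  obtain ⟨z, hzT1, hz⟩ := hlt
  set P := ({a, b, c} : Finset (Fin n)).filter (· < q) with hPdef
  have hPne : P.Nonempty := ⟨z, Finset.mem_filter.mpr ⟨hzT1, hz q hqT2⟩⟩
  set p := P.max' hPne with hpdef
  have hpP : p ∈ P := Finset.max'_mem _ _
  have hpT1 : p ∈ ({a, b, c} : Finset (Fin n)) := (Finset.mem_filter.mp hpP).1
  have hpq : p < q := (Finset.mem_filter.mp hpP).2
  obtain ⟨y, hyT1, hyne⟩ := exists_ne_of_card3 _ hcard1 p
  obtain ⟨y', hy'T2, hy'ne⟩ := exists_ne_of_card3 _ hcard2 q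
  have h1 : y < p ∨ q < y := by
    rcases lt_trichotomy y p with h | h | h
    · exact Or.inl h
    · exact absurd h hyne
    · right
      have hnyq : ¬ y < q := fun hyq =>
        absurd (P.le_max' y (Finset.mem_filter.mpr ⟨hyT1, hyq⟩)) (not_le.mpr h)
      rcases lt_trichotomy y q with h' | h' | h'
      · exact absurd h' hnyq
      · exact absurd hqT2 (fun hq' => Finset.disjoint_left.mp hdisj (h' ▸ hyT1) hq')
      · exact h'
  have h2 : y' < p ∨ q < y' := by
    rcases lt_trichotomy y' q with h | h | h
    · exact absurd (Finset.min'_le _ y' hy'T2) (not_le.mpr h)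
    · exact absurd h hy'ne
    · exact Or.inr h
  have hs1 := flip_side G I F p q hpq p y (Or.inl rfl) (heqv1 p hpT1 y hyT1) h1
  have hs2 := flip_side G I F p q hpq q y' (Or.inr rfl) (heqv2 q hqT2 y' hy'T2) h2
  rcases hs1 with h | h <;> rcases hs2 with h' | h'
  · exact ⟨p, hpT1, q, hqT2, p, q, hpq, h.symm, h'⟩
  · exact ⟨p, hpT1, y', hy'T2, p, q, hpq, h.symm, h'⟩
  · exact ⟨y, hyT1, q, hqT2, p, q, hpq, h.symm, h'⟩
  · exact ⟨y, hyT1, y', hy'T2, p, q, hpq, h.symm, h'⟩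

/-- Given two disjoint triples `a,b,c` and `d,e,f` of lanes of an interchange, each
triple pairwise equivalent under a collection `F` of flips, the flipped graph contains
a two-edge lane–ramp–lane path from a lane of `{a,b,c}` to a lane of `{d,e,f}`. -/
theorem interchange_triple_to_triple {V : Type*} (G : SimpleGraph V) (n : ℕ)
    (I : Interchange G n) (F : Finset (Set V)) (a b c d e f : Fin n)
    (hcard1 : ({a, b, c} : Finset (Fin n)).card = 3)
    (hcard2 : ({d, e, f} : Finset (Fin n)).card = 3)
    (hdisj : Disjoint ({a, b, c} : Finset (Fin n)) ({d, e, f} : Finset (Fin n)))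
    (hab : EqvUnder F (I.lane a) (I.lane b)) (hac : EqvUnder F (I.lane a) (I.lane c))
    (hde : EqvUnder F (I.lane d) (I.lane e)) (hdf : EqvUnder F (I.lane d) (I.lane f)) :
    ∃ x ∈ ({a, b, c} : Finset (Fin n)), ∃ y ∈ ({d, e, f} : Finset (Fin n)),
      ∃ (p q : Fin n) (hpq : p < q),
        (multiFlip G F).Adj (I.lane x) (I.ramp p q hpq) ∧
        (multiFlip G F).Adj (I.ramp p q hpq) (I.lane y) := by
  classical
  have hT1ne : ({a, b, c} : Finset (Fin n)).Nonempty := ⟨a, by simp⟩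
  have hT2ne : ({d, e, f} : Finset (Fin n)).Nonempty := ⟨d, by simp⟩
  set m1 := ({a, b, c} : Finset (Fin n)).min' hT1ne with hm1
  set m2 := ({d, e, f} : Finset (Fin n)).min' hT2ne with hm2
  have hm1T : m1 ∈ ({a, b, c} : Finset (Fin n)) := Finset.min'_mem _ _
  have hm2T : m2 ∈ ({d, e, f} : Finset (Fin n)) := Finset.min'_mem _ _
  have hne : m1 ≠ m2 := fun h => Finset.disjoint_left.mp hdisj hm1T (h ▸ hm2T)
  rcases lt_or_gt_of_ne hne with h | h
  · exact triple_aux G I F a b c d e f hcard1 hcard2 hdisj hab hac hde hdf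
      ⟨m1, hm1T, fun w hw => lt_of_lt_of_le h (Finset.min'_le _ w hw)⟩
  · obtain ⟨x, hx, y, hy, p, q, hpq, hxr, hry⟩ :=
      triple_aux G I F d e f a b c hcard2 hcard1 hdisj.symm hde hdf hab hac
      ⟨m2, hm2T, fun w hw => lt_of_lt_of_le h (Finset.min'_le _ w hw)⟩
    exact ⟨y, hy, x, hx, p, q, hpq, hry.symm, hxr.symm⟩
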